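/- Let π_0 be a probability distribution with full support on a finite set A, η > 0, and f, g: A → [0,1] with Gibbs policies π_f(a) ∝ π_0(a)·exp(-η·f(a)) and π_g(a) ∝ π_0(a)·exp(-η·g(a)). Then for any function P: A × A → [0,1] and any a' ∈ A, |Σ_a (π_f(a) − π_g(a))·P(a', a)| ≤ Σ_a |π_f(a) − π_g(a)| ≤ 2η·exp(2η)·Σ_a π_0(a)·|f(a) − g(a)|. -/

import Mathlib

open Finset Real

lemma aux_exp_lip (x y : ℝ) (hx : x ≤ 0) (hy : y ≤ 0) :
    |Real.exp x - Real.exp y| ≤ |x - y| := by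
  wlog h : y ≤ x
  · rw [abs_sub_comm, abs_sub_comm x y]
    exact this y x hy hx (le_of_not_ge h)
  have h1 : Real.exp y ≤ Real.exp x := Real.exp_le_exp.mpr h
  rw [abs_of_nonneg (by linarith), abs_of_nonneg (by linarith)]
  have h2 : Real.exp x ≤ 1 := Real.exp_le_one_iff.mpr hx
  have h3 : (y - x) + 1 ≤ Real.exp (y - x) := Real.add_one_le_exp _
  have h5 : Real.exp (y - x) ≤ 1 := Real.exp_le_one_iff.mpr (by linarith)
  have h4 : Real.exp y = Real.exp x * Real.exp (y - x) := by
    rw [← Real.exp_add]; ring_nf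
  nlinarith [Real.exp_pos x, Real.exp_pos (y - x)]

theorem stmt_19 {A : Type*} [Fintype A]
    (π0 : A → ℝ) (hpos : ∀ a, 0 < π0 a) (hsum : ∑ a, π0 a = 1)
    (η : ℝ) (hη : 0 < η) (f g : A → ℝ)
    (hf : ∀ a, f a ∈ Set.Icc (0:ℝ) 1) (hg : ∀ a, g a ∈ Set.Icc (0:ℝ) 1)
    (πf πg : A → ℝ)
    (hπf : ∀ a, πf a = π0 a * Real.exp (-(η * f a)) / ∑ a', π0 a' * Real.exp (-(η * f a')))
    (hπg : ∀ a, πg a = π0 a * Real.exp (-(η * g a)) / ∑ a', π0 a' * Real.exp (-(η * g a')))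
    (P : A → A → ℝ) (hP : ∀ a1 a2, P a1 a2 ∈ Set.Icc (0:ℝ) 1) (a' : A) :
    |∑ a, (πf a - πg a) * P a' a| ≤ ∑ a, |πf a - πg a| ∧
      ∑ a, |πf a - πg a| ≤ 2 * η * Real.exp (2 * η) * ∑ a, π0 a * |f a - g a| := by
  constructor
  · calc |∑ a, (πf a - πg a) * P a' a| ≤ ∑ a, |(πf a - πg a) * P a' a| :=
          Finset.abs_sum_le_sum_abs _ _
      _ ≤ ∑ a, |πf a - πg a| := by
          apply Finset.sum_le_sum
          intro a _
          rw [abs_mul]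
          have hPa := hP a' a
          have : |P a' a| ≤ 1 := abs_le.mpr ⟨by linarith [hPa.1], hPa.2⟩
          nlinarith [abs_nonneg (πf a - πg a), abs_nonneg (P a' a)]
  · set Zf := ∑ a', π0 a' * Real.exp (-(η * f a')) with hZfdef
    set Zg := ∑ a', π0 a' * Real.exp (-(η * g a')) with hZgdef
    set S := ∑ a, π0 a * |f a - g a| with hSdef
    have hSnn : 0 ≤ S := Finset.sum_nonneg fun a _ =>
      mul_nonneg (hpos a).le (abs_nonneg _)
    have hne : (Finset.univ : Finset A).Nonempty := by
      rcases (Finset.univ : Finset A).eq_empty_or_nonempty with h | h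
      · rw [h, Finset.sum_empty] at hsum; norm_num at hsum
      · exact h
    have hZfpos : 0 < Zf := Finset.sum_pos
      (fun a _ => mul_pos (hpos a) (Real.exp_pos _)) hne
    have hZgpos : 0 < Zg := Finset.sum_pos
      (fun a _ => mul_pos (hpos a) (Real.exp_pos _)) hne
    have hexp_le (h' : A → ℝ) (hh : ∀ a, h' a ∈ Set.Icc (0:ℝ) 1) (a : A) :
        Real.exp (-(η * h' a)) ≤ 1 :=
      Real.exp_le_one_iff.mpr (by nlinarith [(hh a).1])
    have hexp_ge (h' : A → ℝ) (hh : ∀ a, h' a ∈ Set.Icc (0:ℝ) 1) (a : A) :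
        Real.exp (-η) ≤ Real.exp (-(η * h' a)) :=
      Real.exp_le_exp.mpr (by nlinarith [(hh a).2])
    have hZf_le : Zf ≤ 1 := by
      calc Zf ≤ ∑ a, π0 a * 1 := Finset.sum_le_sum fun a _ =>
            mul_le_mul_of_nonneg_left (hexp_le f hf a) (hpos a).le
        _ = 1 := by simp [hsum]
    have hZg_le : Zg ≤ 1 := by
      calc Zg ≤ ∑ a, π0 a * 1 := Finset.sum_le_sum fun a _ =>
            mul_le_mul_of_nonneg_left (hexp_le g hg a) (hpos a).le
        _ = 1 := by simp [hsum]
    have hZf_ge : Real.exp (-η) ≤ Zf := by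
      calc Real.exp (-η) = ∑ a, π0 a * Real.exp (-η) := by
            rw [← Finset.sum_mul, hsum, one_mul]
        _ ≤ Zf := Finset.sum_le_sum fun a _ =>
            mul_le_mul_of_nonneg_left (hexp_ge f hf a) (hpos a).le
    have hZg_ge : Real.exp (-η) ≤ Zg := by
      calc Real.exp (-η) = ∑ a, π0 a * Real.exp (-η) := by
            rw [← Finset.sum_mul, hsum, one_mul]
        _ ≤ Zg := Finset.sum_le_sum fun a _ =>
            mul_le_mul_of_nonneg_left (hexp_ge g hg a) (hpos a).le
    have hptexp : ∀ a, |Real.exp (-(η * f a)) - Real.exp (-(η * g a))| ≤ η * |f a - g a| := by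
      intro a
      have := aux_exp_lip (-(η * f a)) (-(η * g a))
        (by nlinarith [(hf a).1]) (by nlinarith [(hg a).1])
      calc |Real.exp (-(η * f a)) - Real.exp (-(η * g a))| ≤ |(-(η * f a)) - (-(η * g a))| := this
        _ = η * |f a - g a| := by
            rw [show (-(η * f a)) - (-(η * g a)) = η * (g a - f a) by ring, abs_mul,
              abs_of_pos hη, abs_sub_comm]
    have hZdiff : |Zf - Zg| ≤ η * S := by
      calc |Zf - Zg| = |∑ a, (π0 a * Real.exp (-(η * f a)) - π0 a * Real.exp (-(η * g a)))| := by
            rw [Finset.sum_sub_distrib]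
        _ ≤ ∑ a, |π0 a * Real.exp (-(η * f a)) - π0 a * Real.exp (-(η * g a))| :=
            Finset.abs_sum_le_sum_abs _ _
        _ ≤ ∑ a, π0 a * (η * |f a - g a|) := by
            apply Finset.sum_le_sum
            intro a _
            rw [← mul_sub, abs_mul, abs_of_pos (hpos a)]
            exact mul_le_mul_of_nonneg_left (hptexp a) (hpos a).le
        _ = η * S := by rw [hSdef, Finset.mul_sum]; apply Finset.sum_congr rfl; intros; ring
    have hinvZf : 1 / Zf ≤ Real.exp η := by
      rw [div_le_iff₀ hZfpos]
      calc (1:ℝ) = Real.exp η * Real.exp (-η) := by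
            rw [← Real.exp_add]; simp
        _ ≤ Real.exp η * Zf := mul_le_mul_of_nonneg_left hZf_ge (Real.exp_pos η).le
    have hpt : ∀ a, |πf a - πg a| ≤
        π0 a * (η * |f a - g a|) * Real.exp η + π0 a * (η * S) * Real.exp (2 * η) := by
      intro a
      rw [hπf a, hπg a]
      have hkey : π0 a * Real.exp (-(η * f a)) / Zf - π0 a * Real.exp (-(η * g a)) / Zg =
          π0 a * ((Real.exp (-(η * f a)) - Real.exp (-(η * g a))) * Zg
            + Real.exp (-(η * g a)) * (Zg - Zf)) / (Zf * Zg) := by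
        field_simp
        ring
      rw [hkey, abs_div, abs_mul, abs_of_pos (hpos a),
        abs_of_pos (mul_pos hZfpos hZgpos)]
      have hnum : |(Real.exp (-(η * f a)) - Real.exp (-(η * g a))) * Zg
          + Real.exp (-(η * g a)) * (Zg - Zf)| ≤ η * |f a - g a| * Zg + η * S := by
        calc |(Real.exp (-(η * f a)) - Real.exp (-(η * g a))) * Zg
            + Real.exp (-(η * g a)) * (Zg - Zf)|
            ≤ |(Real.exp (-(η * f a)) - Real.exp (-(η * g a))) * Zg|
              + |Real.exp (-(η * g a)) * (Zg - Zf)| := abs_add_le _ _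
          _ ≤ η * |f a - g a| * Zg + η * S := by
              rw [abs_mul, abs_mul, abs_of_pos hZgpos]
              have h1 : |Real.exp (-(η * g a))| ≤ 1 := by
                rw [abs_of_pos (Real.exp_pos _)]; exact hexp_le g hg a
              have h2 : |Zg - Zf| ≤ η * S := by rw [abs_sub_comm]; exact hZdiff
              have := mul_le_mul h1 h2 (abs_nonneg _) zero_le_one
              have h3 := mul_le_mul_of_nonneg_right (hptexp a) hZgpos.le
              linarith
      have hZZ : Real.exp (-η) * Real.exp (-η) ≤ Zf * Zg :=
        mul_le_mul hZf_ge hZg_ge (Real.exp_pos _).le hZfpos.le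
      -- divide
      have hfrac : (η * |f a - g a| * Zg + η * S) / (Zf * Zg) ≤
          η * |f a - g a| * Real.exp η + η * S * Real.exp (2 * η) := by
        rw [add_div]
        have hA : η * |f a - g a| * Zg / (Zf * Zg) = η * |f a - g a| / Zf := by
          field_simp
        have hB : η * S / (Zf * Zg) ≤ η * S * Real.exp (2 * η) := by
          rw [div_le_iff₀ (mul_pos hZfpos hZgpos)]
          have he : Real.exp (2 * η) * (Real.exp (-η) * Real.exp (-η)) = 1 := by
            rw [← Real.exp_add, ← Real.exp_add]; ring_nf; simp
          nlinarith [mul_nonneg hη.le hSnn, Real.exp_pos (2 * η),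
            mul_le_mul_of_nonneg_left hZZ (Real.exp_pos (2 * η)).le]
        have hC : η * |f a - g a| / Zf ≤ η * |f a - g a| * Real.exp η := by
          rw [div_le_iff₀ hZfpos]
          have he : Real.exp η * Real.exp (-η) = 1 := by
            rw [← Real.exp_add]; simp
          nlinarith [mul_nonneg hη.le (abs_nonneg (f a - g a)), Real.exp_pos η,
            mul_le_mul_of_nonneg_left hZf_ge (Real.exp_pos η).le]
        rw [hA]; linarith
      calc π0 a * |(Real.exp (-(η * f a)) - Real.exp (-(η * g a))) * Zg
          + Real.exp (-(η * g a)) * (Zg - Zf)| / (Zf * Zg)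
          ≤ π0 a * (η * |f a - g a| * Zg + η * S) / (Zf * Zg) := by
            have h0 := (hpos a).le
            gcongr
        _ ≤ π0 a * (η * |f a - g a| * Real.exp η + η * S * Real.exp (2 * η)) := by
            rw [mul_div_assoc]
            exact mul_le_mul_of_nonneg_left hfrac (hpos a).le
        _ = π0 a * (η * |f a - g a|) * Real.exp η + π0 a * (η * S) * Real.exp (2 * η) := by
            ring
    calc ∑ a, |πf a - πg a|
        ≤ ∑ a, (π0 a * (η * |f a - g a|) * Real.exp η + π0 a * (η * S) * Real.exp (2 * η)) :=
          Finset.sum_le_sum fun a _ => hpt a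
      _ = η * Real.exp η * S + η * Real.exp (2 * η) * S := by
          rw [Finset.sum_add_distrib, ← Finset.sum_mul, ← Finset.sum_mul]
          have e1 : ∑ a, π0 a * (η * |f a - g a|) = η * S := by
            rw [hSdef, Finset.mul_sum]; apply Finset.sum_congr rfl; intros; ring
          have e2 : ∑ a, π0 a * (η * S) = η * S := by
            rw [← Finset.sum_mul, hsum, one_mul]
          rw [e1, e2]; ring
      _ ≤ 2 * η * Real.exp (2 * η) * S := by
          have : Real.exp η ≤ Real.exp (2 * η) := Real.exp_le_exp.mpr (by linarith)
          nlinarith [mul_nonneg hη.le hSnn, Real.exp_pos η]
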